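/- Let k be a field, let S be an additive submonoid of ℤ^n, and let R = k[S] be the monoid algebra of S over k (elements are finitely supported functions f : S → k, written f = Σ_m f_m x^m). For t = (t_1, …, t_n) ∈ (kˣ)^n let θ_t : R → R be the map sending f to the element whose coefficient at m is (∏_{i=1}^n t_i^{m_i})·f_m. Then for an ideal I of R the following are equivalent, provided k is infinite: (i) θ_t(f) ∈ I for every t ∈ (kˣ)^n and every f ∈ I; (ii) for every f ∈ I and every m in the support of f, the monomial x^m lies in I (equivalently, I is generated by the monomials it contains). -/

import Mathlib

/-- The action of the torus element `t ∈ (kˣ)^n` on the monoid algebra `k[S]` of a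
submonoid `S ⊆ ℤ^n`: it sends `f = Σ_m f_m x^m` to the element whose coefficient at `m`
is `(∏ i, t i ^ m i) * f_m`. -/
noncomputable def torusAction {n : ℕ} {k : Type*} [Field k] {S : AddSubmonoid (Fin n → ℤ)}
    (t : Fin n → kˣ) (f : AddMonoidAlgebra k S) : AddMonoidAlgebra k S :=
  Finsupp.sum f.coeff fun m a =>
    AddMonoidAlgebra.single m ((((∏ i, t i ^ ((m : Fin n → ℤ) i)) : kˣ) : k) * a)

lemma torusAction_apply {n : ℕ} {k : Type*} [Field k] {S : AddSubmonoid (Fin n → ℤ)}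
    (t : Fin n → kˣ) (f : AddMonoidAlgebra k S) (m : S) :
    (torusAction t f).coeff m = (((∏ i, t i ^ ((m : Fin n → ℤ) i)) : kˣ) : k) * f.coeff m := by
  classical
  rw [torusAction, AddMonoidAlgebra.coeff_finsuppSum, Finsupp.sum_apply]
  rw [Finsupp.sum]
  simp only [AddMonoidAlgebra.coeff_single, Finsupp.single_apply]
  rw [Finset.sum_ite_eq' f.coeff.support m]
  split_ifs with h
  · rfl
  · rw [Finsupp.notMem_support_iff.mp h, mul_zero]

/-- Let `k` be an infinite field, `S ⊆ ℤ^n` an additive submonoid and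
`R = k[S]` its monoid algebra over `k`.  For an ideal `I` of `R` the following are
equivalent: (i) `θ_t f ∈ I` for every torus element `t ∈ (kˣ)^n` and every `f ∈ I`;
(ii) for every `f ∈ I` and every `m` in the support of `f`, the monomial `x^m` lies in
`I` (i.e. `I` is generated by the monomials it contains). -/
theorem stmt_10 {n : ℕ} {k : Type*} [Field k] (hk : Infinite k)
    (S : AddSubmonoid (Fin n → ℤ)) (I : Ideal (AddMonoidAlgebra k S)) :
    (∀ t : Fin n → kˣ, ∀ f ∈ I, torusAction t f ∈ I) ↔
      (∀ f ∈ I, ∀ m ∈ f.coeff.support, AddMonoidAlgebra.single m (1 : k) ∈ I) := by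
  haveI := hk
  classical
  constructor
  · intro h
    -- strong induction on the size of the support
    suffices H : ∀ N : ℕ, ∀ f ∈ I, f.coeff.support.card ≤ N →
        ∀ m ∈ f.coeff.support, AddMonoidAlgebra.single m (1 : k) ∈ I by
      intro f hf m hm
      exact H f.coeff.support.card f hf le_rfl m hm
    intro N
    induction N with
    | zero =>
      intro f _ hcard m hm
      rw [Nat.le_zero, Finset.card_eq_zero] at hcard
      rw [hcard] at hm
      exact absurd hm (Finset.notMem_empty m)
    | succ N ih =>
      intro f hf hcard m hm
      by_cases hsupp : f.coeff.support = {m}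
      · -- f is a monomial
        obtain ⟨hne, hfs⟩ := Finsupp.support_eq_singleton.mp hsupp
        obtain ⟨a, ha, hfa⟩ : ∃ a : k, a ≠ 0 ∧ f = AddMonoidAlgebra.single m a :=
          ⟨f.coeff m, hne, AddMonoidAlgebra.coeff_injective hfs⟩
        have : AddMonoidAlgebra.single m (1 : k)
            = AddMonoidAlgebra.single (0 : S) a⁻¹ * f := by
          rw [hfa, AddMonoidAlgebra.single_mul_single, zero_add, inv_mul_cancel₀ ha]
        rw [this]
        exact I.mul_mem_left _ hf
      · -- pick another element of the support
        have : ∃ m' ∈ f.coeff.support, m' ≠ m := by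
          by_contra hcon
          push_neg at hcon
          apply hsupp
          apply Finset.Subset.antisymm
          · intro x hx; simpa using hcon x hx
          · intro x hx; simp at hx; subst hx; exact hm
        obtain ⟨m', hm's, hm'm⟩ := this
        -- a coordinate where m and m' differ
        have hcoord : ∃ i, (m' : Fin n → ℤ) i ≠ (m : Fin n → ℤ) i := by
          by_contra hcon
          push_neg at hcon
          exact hm'm (Subtype.ext (funext hcon))
        obtain ⟨i₀, hi₀⟩ := hcoord
        set d : ℤ := (m : Fin n → ℤ) i₀ - (m' : Fin n → ℤ) i₀ with hd
        have hd0 : d ≠ 0 := sub_ne_zero.mpr (Ne.symm hi₀)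
        -- find u with u^d ≠ 1
        have hroots : ({x : k | x ^ d.natAbs = 1} ∪ {0}).Finite := by
          apply Set.Finite.union _ (Set.finite_singleton 0)
          have hp : ((Polynomial.X : Polynomial k) ^ d.natAbs - 1) ≠ 0 := by
            intro hcon
            have := congrArg (Polynomial.eval 0) hcon
            simp [zero_pow (Int.natAbs_ne_zero.mpr hd0)] at this
          have := Polynomial.finite_setOf_isRoot hp
          apply Set.Finite.subset this
          intro x hx
          simp only [Set.mem_setOf_eq, Polynomial.IsRoot, Polynomial.eval_sub,
            Polynomial.eval_pow, Polynomial.eval_X, Polynomial.eval_one]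
          rw [Set.mem_setOf_eq.mp hx]; ring
        obtain ⟨u₀, hu₀⟩ := hroots.infinite_compl.nonempty
        simp only [Set.mem_compl_iff, Set.mem_union, Set.mem_setOf_eq,
          Set.mem_singleton_iff, not_or] at hu₀
        set u : kˣ := Units.mk0 u₀ hu₀.2 with hu
        have hud : u ^ d ≠ 1 := by
          intro hcon
          apply hu₀.1
          have hN : u ^ (d.natAbs : ℤ) = 1 := by
            rcases Int.natAbs_eq d with h1 | h1
            · rwa [← h1]
            · rw [← neg_neg ((d.natAbs : ℤ)), ← h1, zpow_neg, hcon, inv_one]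
          rw [zpow_natCast] at hN
          have := congrArg (Units.val) hN
          rw [Units.val_pow_eq_pow_val] at this
          simpa [hu] using this
        -- the torus element
        set t : Fin n → kˣ := fun j => if j = i₀ then u else 1 with ht
        have hchi : ∀ p : S, (∏ i, t i ^ ((p : Fin n → ℤ) i)) = u ^ ((p : Fin n → ℤ) i₀) := by
          intro p
          rw [Finset.prod_eq_single i₀]
          · simp [ht]
          · intro j _ hj; simp [ht, hj]
          · intro hcon; exact absurd (Finset.mem_univ i₀) hcon
        set c : kˣ := ∏ i, t i ^ ((m' : Fin n → ℤ) i) with hc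
        set g : AddMonoidAlgebra k S := torusAction t f - (c : k) • f with hg
        have hgI : g ∈ I := by
          apply sub_mem (h t f hf)
          rw [Algebra.smul_def]
          exact I.mul_mem_left _ hf
        have hgapply : ∀ p : S,
            g.coeff p = (((∏ i, t i ^ ((p : Fin n → ℤ) i) : kˣ) : k) - (c : k)) * f.coeff p := by
          intro p
          rw [hg]
          rw [AddMonoidAlgebra.coeff_sub, Finsupp.sub_apply, torusAction_apply, AddMonoidAlgebra.coeff_smul, Finsupp.smul_apply, smul_eq_mul, sub_mul]
        have hgsub : g.coeff.support ⊆ f.coeff.support.erase m' := by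
          intro p hp
          rw [Finsupp.mem_support_iff, hgapply] at hp
          rcases mul_ne_zero_iff.mp hp with ⟨h1, h2⟩
          rw [Finset.mem_erase]
          refine ⟨?_, Finsupp.mem_support_iff.mpr h2⟩
          intro hpe
          apply h1
          rw [hpe, ← hc, sub_self]
        have hmg : m ∈ g.coeff.support := by
          rw [Finsupp.mem_support_iff, hgapply]
          apply mul_ne_zero _ (Finsupp.mem_support_iff.mp hm)
          rw [sub_ne_zero]
          intro hcon
          apply hud
          have : (∏ i, t i ^ ((m : Fin n → ℤ) i) : kˣ) = c := Units.ext hcon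
          rw [hchi, hc, hchi] at this
          rw [hd, zpow_sub, this]; simp
        have hcardg : g.coeff.support.card ≤ N := by
          have h1 : g.coeff.support.card ≤ (f.coeff.support.erase m').card :=
            Finset.card_le_card hgsub
          have h2 : (f.coeff.support.erase m').card < f.coeff.support.card :=
            Finset.card_erase_lt_of_mem hm's
          omega
        exact ih g hgI hcardg m hmg
  · intro h t f hf
    rw [torusAction, Finsupp.sum]
    apply Submodule.sum_mem
    intro m hm
    have heq : AddMonoidAlgebra.single m ((((∏ i, t i ^ ((m : Fin n → ℤ) i)) : kˣ) : k) * f.coeff m)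
        = AddMonoidAlgebra.single (0 : S) ((((∏ i, t i ^ ((m : Fin n → ℤ) i)) : kˣ) : k) * f.coeff m)
          * AddMonoidAlgebra.single m (1 : k) := by
      rw [AddMonoidAlgebra.single_mul_single, zero_add, mul_one]
    rw [heq]
    exact I.mul_mem_left _ (h f hf m hm)
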